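/- For every natural number k, a_k = ∑_{n=0}^{k} C(k,n)² · C(2n,n), where C(m,j) denotes the binomial coefficient. -/

import Mathlib

/-- `a k` is the number of closed walks of length `k` at a vertex of the triangular
lattice with loops: the sum of squared multinomial coefficients over all triples
`(k₁,k₂,k₃)` of natural numbers with `k₁+k₂+k₃ = k`. -/
def a (k : ℕ) : ℕ :=
  ∑ p ∈ Finset.Nat.antidiagonalTuple 3 k, (Nat.multinomial Finset.univ p) ^ 2

lemma sum_choose_sq (n : ℕ) :
    ∑ i ∈ Finset.range (n + 1), (n.choose i) ^ 2 = (2 * n).choose n := by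
  rw [two_mul, Nat.add_choose_eq, Finset.Nat.sum_antidiagonal_eq_sum_range_succ_mk]
  refine (Finset.sum_congr rfl fun i hi => ?_).symm
  rw [Finset.mem_range] at hi
  show n.choose i * n.choose (n - i) = _
  rw [Nat.choose_symm (by omega), sq]

lemma multinomial_three (p : Fin 3 → ℕ) :
    Nat.multinomial Finset.univ p = (p 0 + p 1 + p 2).choose (p 0) * (p 1 + p 2).choose (p 1) := by
  have h : (Finset.univ : Finset (Fin 3)) = insert 0 {1, 2} := by decide
  rw [h, Nat.multinomial_insert (by decide), Nat.binomial_eq_choose (by decide)]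
  congr 1
  rw [Finset.sum_pair (by decide : (1 : Fin 3) ≠ 2)]
  ring_nf

theorem a_eq_sum_choose_sq_mul_centralBinom (k : ℕ) :
    a k = ∑ n ∈ Finset.range (k + 1), (Nat.choose k n) ^ 2 * Nat.choose (2 * n) n := by
  have key : a k = ∑ ij ∈ Finset.HasAntidiagonal.antidiagonal k, ∑ mn ∈ Finset.HasAntidiagonal.antidiagonal ij.2,
      (Nat.multinomial Finset.univ ![ij.1, mn.1, mn.2]) ^ 2 := by
    rw [a, Finset.sum_sigma']
    refine (Finset.sum_nbij' (i := fun q => ![q.1.1, q.2.1, q.2.2])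
      (j := fun p => ⟨(p 0, p 1 + p 2), (p 1, p 2)⟩) ?_ ?_ ?_ ?_ ?_).symm
    · rintro ⟨⟨a1, a2⟩, ⟨b1, b2⟩⟩ hq
      simp only [Finset.mem_sigma, Finset.HasAntidiagonal.mem_antidiagonal] at hq
      rw [Finset.Nat.mem_antidiagonalTuple, Fin.sum_univ_three]
      simp [← hq.1, ← hq.2]; omega
    · intro p hp
      rw [Finset.Nat.mem_antidiagonalTuple, Fin.sum_univ_three] at hp
      simp only [Finset.mem_sigma, Finset.HasAntidiagonal.mem_antidiagonal]
      exact ⟨by omega, trivial⟩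
    · rintro ⟨⟨a1, a2⟩, ⟨b1, b2⟩⟩ hq
      simp only [Finset.mem_sigma, Finset.HasAntidiagonal.mem_antidiagonal] at hq
      simp only [Matrix.cons_val_zero, Matrix.cons_val_one, Matrix.head_cons,
        Matrix.cons_val_two, Matrix.tail_cons]
      exact Sigma.ext (by simp [hq.2]) (by simp)
    · intro p hp
      funext i
      fin_cases i <;> rfl
    · rintro ⟨⟨a1, a2⟩, ⟨b1, b2⟩⟩ hq
      rfl
  rw [key]
  have step : ∀ ij ∈ Finset.HasAntidiagonal.antidiagonal k,
      (∑ mn ∈ Finset.HasAntidiagonal.antidiagonal ij.2,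
        (Nat.multinomial Finset.univ ![ij.1, mn.1, mn.2]) ^ 2)
      = (k.choose ij.1) ^ 2 * (2 * ij.2).choose ij.2 := by
    rintro ⟨i, j⟩ hij
    rw [Finset.HasAntidiagonal.mem_antidiagonal] at hij
    have : ∀ mn ∈ Finset.HasAntidiagonal.antidiagonal j,
        (Nat.multinomial Finset.univ ![i, mn.1, mn.2]) ^ 2
          = (k.choose i) ^ 2 * (j.choose mn.1) ^ 2 := by
      rintro ⟨m, n⟩ hmn
      rw [Finset.HasAntidiagonal.mem_antidiagonal] at hmn
      rw [multinomial_three]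
      simp only [Matrix.cons_val_zero, Matrix.cons_val_one, Matrix.head_cons,
        Matrix.cons_val_two, Matrix.tail_cons]
      rw [show i + m + n = k by omega, show m + n = j from hmn, mul_pow]
    rw [Finset.sum_congr rfl this, ← Finset.mul_sum, ← sum_choose_sq,
      Finset.Nat.sum_antidiagonal_eq_sum_range_succ_mk]
  rw [Finset.sum_congr rfl step, Finset.Nat.sum_antidiagonal_eq_sum_range_succ_mk,
    ← Finset.sum_range_reflect]
  refine Finset.sum_congr rfl fun n hn => ?_
  rw [Finset.mem_range] at hn
  show k.choose (k + 1 - 1 - n) ^ 2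
      * (2 * (k - (k + 1 - 1 - n))).choose (k - (k + 1 - 1 - n)) = _
  rw [show k + 1 - 1 - n = k - n by omega, show k - (k - n) = n by omega,
    Nat.choose_symm (by omega)]
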